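/- arXiv:1805.11580 — 3 statements merged into one kernel-verified Lean document; each statement's English description precedes it below -/
import Mathlib

section
/- Under the hypotheses of the previous setting, the block matrix identity [0, -X] · ([[zd_0, -c_0 X],[Y, zD_A - A]])^{-1} · [I; 0] = (z d_0 a(z) + c_0)^{-1} holds, provided z d_0 a(z) + c_0 is invertible. -/
open Matrix

private lemma resolvent_linearization_aux
    {K : Type*} [Field K] {r n : ℕ}
    (a c0 d e ai ei : Matrix (Fin r) (Fin r) K)
    (D Di : Matrix (Fin n) (Fin n) K)
    (X : Matrix (Fin r) (Fin n) K) (Y : Matrix (Fin n) (Fin r) K)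
    (haa' : ai * a = 1) (hDD : D * Di = 1) (hee : e * ei = 1)
    (hres : ai = X * Di * Y) (hedef : e = d * a + c0) :
    Matrix.fromCols (0 : Matrix (Fin r) (Fin r) K) (-X) *
      (Matrix.fromBlocks d (-(c0 * X)) Y D)⁻¹ *
      Matrix.fromRows (1 : Matrix (Fin r) (Fin r) K) (0 : Matrix (Fin n) (Fin r) K)
      = ei := by
  set N : Matrix (Fin r ⊕ Fin n) (Fin r ⊕ Fin n) K :=
    Matrix.fromBlocks (a * ei) (a * ei * (c0 * X) * Di)
      (-(Di * Y * (a * ei))) (Di - Di * Y * (a * ei) * (c0 * X) * Di) with hN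
  have key : d * a + c0 * (X * Di * Y) * a = e := by
    rw [← hres, hedef]
    rw [Matrix.mul_assoc c0 ai a, haa', Matrix.mul_one]
  have h11 : d * (a * ei) + -(c0 * X) * -(Di * Y * (a * ei)) = 1 := by
    have h : d * (a * ei) + -(c0 * X) * -(Di * Y * (a * ei))
        = (d * a + c0 * (X * Di * Y) * a) * ei := by
      simp only [Matrix.neg_mul, Matrix.mul_neg, neg_neg, Matrix.add_mul, Matrix.mul_assoc]
    rw [h, key, hee]
  have h12 : d * (a * ei * (c0 * X) * Di)
      + -(c0 * X) * (Di - Di * Y * (a * ei) * (c0 * X) * Di) = 0 := by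
    have h : d * (a * ei * (c0 * X) * Di)
          + -(c0 * X) * (Di - Di * Y * (a * ei) * (c0 * X) * Di)
        = (d * a + c0 * (X * Di * Y) * a) * (ei * (c0 * X * Di))
            - c0 * (X * Di) := by
      simp only [Matrix.neg_mul, Matrix.mul_neg, neg_neg, Matrix.add_mul, Matrix.mul_add, Matrix.mul_sub,
        Matrix.sub_mul, Matrix.mul_assoc, sub_eq_add_neg, neg_add_rev]
      abel
    rw [h, key, ← Matrix.mul_assoc e ei, hee, Matrix.one_mul, Matrix.mul_assoc,
      sub_self]
  have h21 : Y * (a * ei) + D * -(Di * Y * (a * ei)) = 0 := by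
    have h : Y * (a * ei) + D * -(Di * Y * (a * ei))
        = Y * (a * ei) - (D * Di) * (Y * (a * ei)) := by
      simp only [Matrix.mul_neg, Matrix.mul_assoc, sub_eq_add_neg]
    rw [h, hDD, Matrix.one_mul, sub_self]
  have h22 : Y * (a * ei * (c0 * X) * Di)
      + D * (Di - Di * Y * (a * ei) * (c0 * X) * Di) = 1 := by
    have h : Y * (a * ei * (c0 * X) * Di)
          + D * (Di - Di * Y * (a * ei) * (c0 * X) * Di)
        = Y * (a * ei * (c0 * X) * Di) + D * Di
            - (D * Di) * (Y * (a * ei * (c0 * X) * Di)) := by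
      simp only [Matrix.mul_neg, Matrix.mul_sub, Matrix.mul_add, Matrix.mul_assoc, sub_eq_add_neg]
      abel
    rw [h, hDD, Matrix.one_mul, add_sub_cancel_left]
  have hMN : Matrix.fromBlocks d (-(c0 * X)) Y D * N = 1 := by
    rw [hN, Matrix.fromBlocks_multiply, h11, h12, h21, h22, Matrix.fromBlocks_one]
  have hinv : (Matrix.fromBlocks d (-(c0 * X)) Y D)⁻¹ = N :=
    inv_eq_right_inv hMN
  rw [hinv, hN, Matrix.fromCols_mul_fromBlocks, Matrix.fromCols_mul_fromRows]
  simp only [Matrix.zero_mul, Matrix.mul_zero, zero_add, add_zero, Matrix.mul_one,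
    Matrix.neg_mul, Matrix.mul_neg, neg_neg]
  have h : X * (Di * Y * (a * ei)) = (X * Di * Y) * a * ei := by
    simp only [Matrix.mul_assoc]
  rw [h, ← hres, haa', Matrix.one_mul]

theorem resolvent_linearization_e1
    {K : Type*} [Field K] {r n : ℕ}
    (z : K) (a c0 d0 : Matrix (Fin r) (Fin r) K)
    (A DA : Matrix (Fin n) (Fin n) K)
    (X : Matrix (Fin r) (Fin n) K) (Y : Matrix (Fin n) (Fin r) K)
    (ha : IsUnit a.det) (hA : IsUnit (z • DA - A).det)
    (hres : a⁻¹ = X * (z • DA - A)⁻¹ * Y)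
    (he : IsUnit (z • (d0 * a) + c0).det) :
    Matrix.fromCols (0 : Matrix (Fin r) (Fin r) K) (-X) *
      (Matrix.fromBlocks (z • d0) (-(c0 * X)) Y (z • DA - A))⁻¹ *
      Matrix.fromRows (1 : Matrix (Fin r) (Fin r) K) (0 : Matrix (Fin n) (Fin r) K)
      = (z • (d0 * a) + c0)⁻¹ := by
  exact resolvent_linearization_aux a c0 (z • d0) (z • (d0 * a) + c0) a⁻¹
    (z • (d0 * a) + c0)⁻¹ (z • DA - A) (z • DA - A)⁻¹ X Y
    (nonsing_inv_mul a ha) (mul_nonsing_inv _ hA) (mul_nonsing_inv _ he)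
    hres (by rw [Matrix.smul_mul])
end

section
/- Under the hypotheses of Theorem 5 and assuming h(z) = z a(z) d_0 b(z) + c_0 is invertible, the identity [0, 0, X_B] (zD_H - H)^{-1} [Y_A; 0; 0] = h(z)^{-1} holds, where zD_H - H is the 3×3 block matrix [[zD_A - A, 0, Y_A c_0 X_B],[X_A, z d_0, 0],[0, Y_B, zD_B - B]]. -/
open Matrix

private lemma fromRows_add' {R : Type*} [AddCommMonoid R] {m₁ m₂ n : Type*}
    (A₁ : Matrix m₁ n R) (A₂ : Matrix m₂ n R) (B₁ : Matrix m₁ n R) (B₂ : Matrix m₂ n R) :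
    fromRows A₁ A₂ + fromRows B₁ B₂ = fromRows (A₁ + B₁) (A₂ + B₂) := by
  ext (i | i) j <;> rfl

theorem resolvent_algebraic_linearization
    {K : Type*} [Field K] {r n m : ℕ}
    (z : K) (a b c0 d0 : Matrix (Fin r) (Fin r) K)
    (A DA : Matrix (Fin n) (Fin n) K) (B DB : Matrix (Fin m) (Fin m) K)
    (XA : Matrix (Fin r) (Fin n) K) (YA : Matrix (Fin n) (Fin r) K)
    (XB : Matrix (Fin r) (Fin m) K) (YB : Matrix (Fin m) (Fin r) K)
    (ha : IsUnit a.det) (hb : IsUnit b.det)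
    (hA : IsUnit (z • DA - A).det) (hB : IsUnit (z • DB - B).det)
    (hresa : a⁻¹ = XA * (z • DA - A)⁻¹ * YA)
    (hresb : b⁻¹ = XB * (z • DB - B)⁻¹ * YB)
    (hh : IsUnit (z • (a * d0 * b) + c0).det) :
    Matrix.fromCols
        (Matrix.fromCols (0 : Matrix (Fin r) (Fin n) K) (0 : Matrix (Fin r) (Fin r) K)) XB *
      (Matrix.fromBlocks
        (Matrix.fromBlocks (z • DA - A) 0 XA (z • d0))
        (Matrix.fromRows (YA * c0 * XB) (0 : Matrix (Fin r) (Fin m) K))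
        (Matrix.fromCols (0 : Matrix (Fin m) (Fin n) K) YB)
        (z • DB - B))⁻¹ *
      Matrix.fromRows
        (Matrix.fromRows YA (0 : Matrix (Fin r) (Fin r) K)) (0 : Matrix (Fin m) (Fin r) K)
      = (z • (a * d0 * b) + c0)⁻¹ := by
  set Ab := z • DA - A with hAbdef
  set Bb := z • DB - B with hBbdef
  set h := z • (a * d0 * b) + c0 with hhdef
  have hA1 : Ab * Ab⁻¹ = 1 := mul_nonsing_inv _ hA
  have hB1 : Bb * Bb⁻¹ = 1 := mul_nonsing_inv _ hB
  have ha2 : a⁻¹ * a = 1 := nonsing_inv_mul _ ha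
  have hb1 : b * b⁻¹ = 1 := mul_nonsing_inv _ hb
  have hb2 : b⁻¹ * b = 1 := nonsing_inv_mul _ hb
  have hh1 : h * h⁻¹ = 1 := mul_nonsing_inv _ hh
  have resb' : XB * (Bb⁻¹ * YB) = b⁻¹ := by
    rw [← Matrix.mul_assoc]; exact hresb.symm
  -- key algebraic identities
  have hschur : z • d0 + a⁻¹ * (c0 * b⁻¹) = a⁻¹ * (h * b⁻¹) := by
    have h1 : h * b⁻¹ = z • (a * d0) + c0 * b⁻¹ := by
      rw [hhdef, add_mul, smul_mul_assoc, Matrix.mul_assoc (a * d0), hb1, Matrix.mul_one]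
    rw [h1, mul_add, mul_smul_comm, ← Matrix.mul_assoc, ← Matrix.mul_assoc a⁻¹ a d0,
      ha2, Matrix.one_mul]
  have h2 : a⁻¹ * (a * d0 * b) = d0 * b := by
    rw [← Matrix.mul_assoc, ← Matrix.mul_assoc, ha2, Matrix.one_mul]
  have key0 : a⁻¹ * h = a⁻¹ * c0 + z • (d0 * b) := by
    rw [hhdef, mul_add, mul_smul_comm, h2, add_comm]
  have keyh : a⁻¹ * (c0 * h⁻¹) + z • (d0 * (b * h⁻¹)) = a⁻¹ := by
    have h3 := congrArg (fun M => M * h⁻¹) key0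
    simp only [add_mul, smul_mul_assoc, Matrix.mul_assoc] at h3
    rw [hh1, Matrix.mul_one] at h3
    exact h3.symm
  -- the solution of M * W = w
  set x : Matrix (Fin n) (Fin r) K := Ab⁻¹ * (YA * (1 - c0 * h⁻¹)) with hxdef
  set y : Matrix (Fin r) (Fin r) K := -(b * h⁻¹) with hydef
  set t : Matrix (Fin m) (Fin r) K := Bb⁻¹ * (YB * (b * h⁻¹)) with htdef
  have hXBt : XB * t = h⁻¹ := by
    rw [htdef, ← Matrix.mul_assoc, ← Matrix.mul_assoc, ← hresb, ← Matrix.mul_assoc,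
      hb2, Matrix.one_mul]
  have E1 : Ab * x + (YA * c0 * XB) * t = YA := by
    rw [hxdef, ← Matrix.mul_assoc, hA1, Matrix.one_mul, Matrix.mul_assoc (YA * c0) XB t,
      hXBt, Matrix.mul_assoc YA c0 h⁻¹, Matrix.mul_sub, Matrix.mul_one, sub_add_cancel]
  have E2 : XA * x + (z • d0) * y = 0 := by
    have hXAx : XA * x = a⁻¹ - a⁻¹ * (c0 * h⁻¹) := by
      rw [hxdef, ← Matrix.mul_assoc, ← Matrix.mul_assoc, ← hresa, mul_sub,
        Matrix.mul_one]
    have hd0y : (z • d0) * y = -(z • (d0 * (b * h⁻¹))) := by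
      rw [hydef, mul_neg, smul_mul_assoc]
    rw [hXAx, hd0y, ← sub_eq_add_neg, sub_sub, keyh, sub_self]
  have E3 : YB * y + Bb * t = 0 := by
    rw [hydef, htdef, Matrix.mul_neg, ← Matrix.mul_assoc Bb Bb⁻¹ (YB * (b * h⁻¹)), hB1, Matrix.one_mul,
      neg_add_cancel]
  -- invertibility of the big matrix
  haveI := Bb.invertibleOfIsUnitDet hB
  haveI := Ab.invertibleOfIsUnitDet hA
  have hQR : fromRows (YA * c0 * XB) (0 : Matrix (Fin r) (Fin m) K) * Bb⁻¹ *
      fromCols (0 : Matrix (Fin m) (Fin n) K) YB =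
      fromBlocks 0 (YA * (c0 * b⁻¹)) 0 0 := by
    rw [fromRows_mul, fromRows_mul_fromCols]
    simp only [Matrix.zero_mul, Matrix.mul_zero, Matrix.mul_assoc, resb']
  have hXAT : XA * Ab⁻¹ * (YA * (c0 * b⁻¹)) = a⁻¹ * (c0 * b⁻¹) := by
    rw [← Matrix.mul_assoc, ← hresa]
  have hdet : IsUnit (fromBlocks
      (fromBlocks Ab 0 XA (z • d0))
      (fromRows (YA * c0 * XB) (0 : Matrix (Fin r) (Fin m) K))
      (fromCols (0 : Matrix (Fin m) (Fin n) K) YB)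
      Bb).det := by
    rw [det_fromBlocks₂₂, invOf_eq_nonsing_inv, hQR]
    refine hB.mul ?_
    have hsub : fromBlocks Ab (0 : Matrix (Fin n) (Fin r) K) XA (z • d0) -
        fromBlocks 0 (YA * (c0 * b⁻¹)) 0 0 =
        fromBlocks Ab (-(YA * (c0 * b⁻¹))) XA (z • d0) := by
      ext (i | i) (j | j) <;> simp [fromBlocks]
    rw [hsub, det_fromBlocks₁₁, invOf_eq_nonsing_inv, Matrix.mul_neg, sub_neg_eq_add,
      hXAT, hschur, det_mul, det_mul]
    exact hA.mul ((a.isUnit_nonsing_inv_det ha).mul (hh.mul (b.isUnit_nonsing_inv_det hb)))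
  -- M * W = w
  have hMW : (fromBlocks
      (fromBlocks Ab 0 XA (z • d0))
      (fromRows (YA * c0 * XB) (0 : Matrix (Fin r) (Fin m) K))
      (fromCols (0 : Matrix (Fin m) (Fin n) K) YB)
      Bb) * fromRows (fromRows x y) t =
      fromRows (fromRows YA (0 : Matrix (Fin r) (Fin r) K)) (0 : Matrix (Fin m) (Fin r) K) := by
    rw [fromBlocks_mul_fromRows, fromBlocks_mul_fromRows, fromRows_mul,
      fromCols_mul_fromRows, fromRows_add']
    simp only [Matrix.zero_mul, Matrix.mul_zero, add_zero, zero_add, E1, E2, E3]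
  -- conclude
  have hinv : (fromBlocks
      (fromBlocks Ab 0 XA (z • d0))
      (fromRows (YA * c0 * XB) (0 : Matrix (Fin r) (Fin m) K))
      (fromCols (0 : Matrix (Fin m) (Fin n) K) YB)
      Bb)⁻¹ * fromRows (fromRows YA (0 : Matrix (Fin r) (Fin r) K))
        (0 : Matrix (Fin m) (Fin r) K) = fromRows (fromRows x y) t := by
    rw [← hMW, ← Matrix.mul_assoc, nonsing_inv_mul _ hdet, Matrix.one_mul]
  rw [Matrix.mul_assoc, hinv, fromCols_mul_fromRows, fromCols_mul_fromRows,
    Matrix.zero_mul, Matrix.zero_mul, add_zero, zero_add, hXBt]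
end

section
/- If A is an n×n monic linearization of the r×r matrix polynomial a(z) of degree s with standard triple (X, A, Y), i.e. X(zI - A)^{-1}Y = a(z)^{-1}, and c(z) = Σ_{k=0}^{s-1} c_k z^k has degree at most s-1, then G = A - Σ_{k=0}^{s-1} A^k Y c_k X satisfies X(zI - G)^{-1}Y = (a(z) + c(z))^{-1} for all z where a(z)+c(z) is invertible. -/
open Matrix Finset

namespace MonicAddAux

variable {K : Type*} [Field K] {r : ℕ}

/-- Horner-type polynomials built from a coefficient sequence `γ`. -/
def bp (z : K) (γ : ℕ → Matrix (Fin r) (Fin r) K) (s : ℕ) : ℕ → Matrix (Fin r) (Fin r) K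
  | 0 => 1
  | m + 1 => z • bp z γ s m + γ (s - 1 - m)

lemma bp_succ (z : K) (γ : ℕ → Matrix (Fin r) (Fin r) K) (s m : ℕ) :
    bp z γ s (m + 1) = z • bp z γ s m + γ (s - 1 - m) := rfl

lemma bp_eq (z : K) (γ : ℕ → Matrix (Fin r) (Fin r) K) (s : ℕ) :
    ∀ m, m ≤ s → bp z γ s m = z ^ m • (1 : Matrix (Fin r) (Fin r) K)
      + ∑ j ∈ range m, z ^ j • γ (s - m + j) := by
  intro m
  induction m with
  | zero => intro _; simp [bp]
  | succ m ih =>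
    intro h
    rw [bp_succ, ih (by omega),
      sum_range_succ' (fun j => z ^ j • γ (s - (m + 1) + j))]
    have e2 : s - 1 - m = s - (m + 1) + 0 := by omega
    rw [smul_add, smul_smul, ← pow_succ']
    rw [show (∑ j ∈ range m, z ^ (j + 1) • γ (s - (m + 1) + (j + 1)))
        = ∑ j ∈ range m, z • z ^ j • γ (s - m + j) from
      Finset.sum_congr rfl fun j _ => by
        rw [show s - (m + 1) + (j + 1) = s - m + j by omega, pow_succ', ← smul_smul]]
    rw [← Finset.smul_sum, pow_zero, one_smul, e2]
    abel

lemma telescope {n : Type*} [Fintype n] [DecidableEq n]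
    (z : K) (γ : ℕ → Matrix (Fin r) (Fin r) K) (s : ℕ)
    (M : Matrix n n K) (Y : Matrix n (Fin r) K) :
    ∀ m, m ≤ s →
      (z • (1 : Matrix n n K) - M) *
          (∑ j ∈ range m, M ^ (s - m + j) * Y * bp z γ s (m - 1 - j))
        = M ^ (s - m) * Y * bp z γ s m - M ^ s * Y
            - ∑ j ∈ range m, M ^ (s - m + j) * Y * γ (s - m + j) := by
  intro m
  induction m with
  | zero => intro _; simp [bp]
  | succ m ih =>
    intro h
    have hsum : (∑ j ∈ range (m + 1), M ^ (s - (m + 1) + j) * Y * bp z γ s (m + 1 - 1 - j))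
        = (∑ j ∈ range m, M ^ (s - m + j) * Y * bp z γ s (m - 1 - j))
          + M ^ (s - (m + 1)) * Y * bp z γ s m := by
      rw [sum_range_succ' (fun j => M ^ (s - (m + 1) + j) * Y * bp z γ s (m + 1 - 1 - j))]
      congr 1
      exact Finset.sum_congr rfl fun j _ => by
        rw [show s - (m + 1) + (j + 1) = s - m + j by omega,
          show m + 1 - 1 - (j + 1) = m - 1 - j by omega]
    have hsum2 : (∑ j ∈ range (m + 1), M ^ (s - (m + 1) + j) * Y * γ (s - (m + 1) + j))
        = (∑ j ∈ range m, M ^ (s - m + j) * Y * γ (s - m + j))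
          + M ^ (s - (m + 1)) * Y * γ (s - (m + 1)) := by
      rw [sum_range_succ' (fun j => M ^ (s - (m + 1) + j) * Y * γ (s - (m + 1) + j))]
      congr 1
      exact Finset.sum_congr rfl fun j _ => by
        rw [show s - (m + 1) + (j + 1) = s - m + j by omega]
    have hextra : (z • (1 : Matrix n n K) - M) * (M ^ (s - (m + 1)) * Y * bp z γ s m)
        = M ^ (s - (m + 1)) * Y * bp z γ s (m + 1)
          - M ^ (s - (m + 1)) * Y * γ (s - (m + 1))
          - M ^ (s - m) * Y * bp z γ s m := by
      have hz : z • bp z γ s m = bp z γ s (m + 1) - γ (s - 1 - m) := by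
        rw [bp_succ]; abel
      have hpow : M * (M ^ (s - (m + 1)) * Y * bp z γ s m)
          = M ^ (s - m) * Y * bp z γ s m := by
        rw [← Matrix.mul_assoc, ← Matrix.mul_assoc, ← pow_succ',
          show s - (m + 1) + 1 = s - m by omega]
      rw [Matrix.sub_mul, Matrix.smul_mul, Matrix.one_mul, hpow, ← Matrix.mul_smul, hz,
        show s - 1 - m = s - (m + 1) by omega, Matrix.mul_sub]
    rw [hsum, Matrix.mul_add, ih (by omega), hextra, hsum2, bp_succ,
      show s - 1 - m = s - (m + 1) by omega]
    abel



lemma mul_blockcols {K : Type*} [Semiring K] {n₁ n₂ p m : Type*} [Fintype n₁]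
    (N : Matrix n₂ n₁ K) (F : p → Matrix n₁ m K) :
    N * (Matrix.of fun i (j : p × m) => F j.1 i j.2)
      = Matrix.of fun i (j : p × m) => (N * F j.1) i j.2 := by
  ext i j
  simp [Matrix.mul_apply]


end MonicAddAux


theorem monic_addition_linearization
    {K : Type*} [Field K] {r s : ℕ} (hs : 0 < s)
    (α c : Fin s → Matrix (Fin r) (Fin r) K)
    (A : Matrix (Fin s × Fin r) (Fin s × Fin r) K)
    (X : Matrix (Fin r) (Fin s × Fin r) K)
    (Y : Matrix (Fin s × Fin r) (Fin r) K)
    -- resolvent form of the standard triple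
    (hres : ∀ z : K, IsUnit (z • (1 : Matrix (Fin s × Fin r) (Fin s × Fin r) K) - A).det →
      X * (z • (1 : Matrix (Fin s × Fin r) (Fin s × Fin r) K) - A)⁻¹ * Y
        = (z ^ s • (1 : Matrix (Fin r) (Fin r) K) + ∑ k : Fin s, z ^ (k : ℕ) • α k)⁻¹)
    -- invertibility of the block Vandermonde V = [Y, AY, ..., A^{s-1}Y]
    (hV : IsUnit (Matrix.of fun (i : Fin s × Fin r) (j : Fin s × Fin r) =>
        (A ^ (j.1 : ℕ) * Y) i j.2).det)
    -- generalized Cayley–Hamilton: A^s Y = -∑ A^{k} Y α_k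
    (hAY : A ^ s * Y = -∑ k : Fin s, A ^ (k : ℕ) * Y * α k)
    -- X = [0, ..., 0, I] V⁻¹
    (hX : ∀ k : Fin s, X * (A ^ (k : ℕ) * Y)
        = if (k : ℕ) = s - 1 then (1 : Matrix (Fin r) (Fin r) K) else 0) :
    ∀ z : K,
      IsUnit ((z ^ s • (1 : Matrix (Fin r) (Fin r) K) + ∑ k : Fin s, z ^ (k : ℕ) • α k)
          + ∑ k : Fin s, z ^ (k : ℕ) • c k).det →
      X * (z • (1 : Matrix (Fin s × Fin r) (Fin s × Fin r) K)
            - (A - ∑ k : Fin s, A ^ (k : ℕ) * Y * c k * X))⁻¹ * Y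
        = ((z ^ s • (1 : Matrix (Fin r) (Fin r) K) + ∑ k : Fin s, z ^ (k : ℕ) • α k)
            + ∑ k : Fin s, z ^ (k : ℕ) • c k)⁻¹ := by
  intro z hq
  classical
  set γ : ℕ → Matrix (Fin r) (Fin r) K :=
    fun k => if h : k < s then α ⟨k, h⟩ + c ⟨k, h⟩ else 0 with hγ
  set G : Matrix (Fin s × Fin r) (Fin s × Fin r) K :=
    A - ∑ k : Fin s, A ^ (k : ℕ) * Y * c k * X with hGdef
  set q : Matrix (Fin r) (Fin r) K :=
    (z ^ s • (1 : Matrix (Fin r) (Fin r) K) + ∑ k : Fin s, z ^ (k : ℕ) • α k)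
      + ∑ k : Fin s, z ^ (k : ℕ) • c k with hqdef
  have hXn : ∀ k, k < s → X * (A ^ k * Y)
      = if k = s - 1 then (1 : Matrix (Fin r) (Fin r) K) else 0 := fun k hk => hX ⟨k, hk⟩
  -- action of G on the block columns
  have hGmul : ∀ k, k < s → G * (A ^ k * Y)
      = A ^ (k + 1) * Y
        - (if k = s - 1 then ∑ j : Fin s, A ^ (j : ℕ) * Y * c j else 0) := by
    intro k hk
    rw [hGdef, Matrix.sub_mul, Matrix.sum_mul]
    congr 1
    · rw [← Matrix.mul_assoc, ← pow_succ']
    · calc ∑ j : Fin s, A ^ (j : ℕ) * Y * c j * X * (A ^ k * Y)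
          = ∑ j : Fin s, A ^ (j : ℕ) * Y * c j
              * (if k = s - 1 then (1 : Matrix (Fin r) (Fin r) K) else 0) := by
            refine Finset.sum_congr rfl fun j _ => ?_
            rw [Matrix.mul_assoc, hXn k hk]
        _ = _ := by split_ifs <;> simp
  have hGA : ∀ k, k < s → G ^ k * Y = A ^ k * Y := by
    intro k
    induction k with
    | zero => intro _; simp
    | succ k ih =>
      intro hk
      rw [pow_succ', Matrix.mul_assoc, ih (by omega), hGmul k (by omega),
        if_neg (show ¬ k = s - 1 by omega), sub_zero]
  have hGs : G ^ s * Y = -∑ j ∈ range s, G ^ j * Y * γ j := by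
    have h1 : G ^ s * Y = A ^ s * Y - ∑ j : Fin s, A ^ (j : ℕ) * Y * c j := by
      have hss : G ^ s = G * G ^ (s - 1) := by
        rw [← pow_succ']; congr 1; omega
      rw [hss, Matrix.mul_assoc, hGA (s - 1) (by omega), hGmul (s - 1) (by omega),
        if_pos rfl, show s - 1 + 1 = s by omega]
    have h2 : (∑ j ∈ range s, G ^ j * Y * γ j)
        = ∑ k : Fin s, (A ^ (k : ℕ) * Y * α k + A ^ (k : ℕ) * Y * c k) := by
      rw [← Fin.sum_univ_eq_sum_range (fun j => G ^ j * Y * γ j) s]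
      refine Finset.sum_congr rfl fun k _ => ?_
      rw [hGA k k.isLt, hγ]
      simp only [dif_pos k.isLt, Fin.eta]
      rw [Matrix.mul_add]
    rw [h1, hAY, h2, Finset.sum_add_distrib]
    abel
  set S : Matrix (Fin s × Fin r) (Fin r) K :=
    ∑ j ∈ range s, G ^ j * Y * MonicAddAux.bp z γ s (s - 1 - j) with hSdef
  have key : (z • (1 : Matrix (Fin s × Fin r) (Fin s × Fin r) K) - G) * S
      = Y * MonicAddAux.bp z γ s s := by
    have hT := MonicAddAux.telescope z γ s G Y s le_rfl
    simp only [Nat.sub_self, Nat.zero_add, zero_add] at hT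
    rw [hGs, sub_neg_eq_add, add_sub_cancel_right, pow_zero, Matrix.one_mul] at hT
    exact hT
  have hbs : MonicAddAux.bp z γ s s = q := by
    rw [MonicAddAux.bp_eq z γ s s le_rfl, hqdef, add_assoc]
    congr 1
    simp only [Nat.sub_self, Nat.zero_add, zero_add]
    rw [← Finset.sum_add_distrib, ← Fin.sum_univ_eq_sum_range (fun j => z ^ j • γ j) s]
    refine Finset.sum_congr rfl fun k _ => ?_
    rw [hγ]
    simp only [dif_pos k.isLt, Fin.eta, smul_add]
  have hXS : X * S = 1 := by
    rw [hSdef, Matrix.mul_sum]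
    have hterm : ∀ j ∈ range s, X * (G ^ j * Y * MonicAddAux.bp z γ s (s - 1 - j))
        = if j = s - 1 then MonicAddAux.bp z γ s (s - 1 - j) else 0 := by
      intro j hj
      rw [← Matrix.mul_assoc, hGA j (mem_range.mp hj), hXn j (mem_range.mp hj)]
      split_ifs with h
      · rw [Matrix.one_mul]
      · rw [Matrix.zero_mul]
    rw [Finset.sum_congr rfl hterm, Finset.sum_ite_eq' (range s) (s - 1)
      (fun j => MonicAddAux.bp z γ s (s - 1 - j)),
      if_pos (Finset.mem_range.mpr (by omega)), Nat.sub_self]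
    rfl
  have hqq : q * q⁻¹ = 1 := Matrix.mul_nonsing_inv q hq
  have h2 : (z • (1 : Matrix (Fin s × Fin r) (Fin s × Fin r) K) - G) * (S * q⁻¹) = Y := by
    rw [← Matrix.mul_assoc, key, hbs, Matrix.mul_assoc, hqq, Matrix.mul_one]
  have hcol : ∀ k : Fin s,
      (z • (1 : Matrix (Fin s × Fin r) (Fin s × Fin r) K) - G) * (G ^ (k : ℕ) * (S * q⁻¹))
        = A ^ (k : ℕ) * Y := by
    intro k
    have hcomm : (z • (1 : Matrix (Fin s × Fin r) (Fin s × Fin r) K) - G) * G ^ (k : ℕ)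
        = G ^ (k : ℕ) * (z • (1 : Matrix (Fin s × Fin r) (Fin s × Fin r) K) - G) :=
      ((((Commute.one_left G).smul_left z).sub_left (Commute.refl G)).pow_right _).eq
    calc (z • (1 : Matrix (Fin s × Fin r) (Fin s × Fin r) K) - G) * (G ^ (k : ℕ) * (S * q⁻¹))
        = ((z • 1 - G) * G ^ (k : ℕ)) * (S * q⁻¹) := (Matrix.mul_assoc _ _ _).symm
      _ = (G ^ (k : ℕ) * (z • 1 - G)) * (S * q⁻¹) := by rw [hcomm]
      _ = G ^ (k : ℕ) * ((z • 1 - G) * (S * q⁻¹)) := Matrix.mul_assoc _ _ _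
      _ = G ^ (k : ℕ) * Y := by rw [h2]
      _ = A ^ (k : ℕ) * Y := hGA _ k.isLt
  have hprod : (z • (1 : Matrix (Fin s × Fin r) (Fin s × Fin r) K) - G)
        * (Matrix.of fun i (j : Fin s × Fin r) => (G ^ (j.1 : ℕ) * (S * q⁻¹)) i j.2)
      = Matrix.of fun (i : Fin s × Fin r) (j : Fin s × Fin r) => (A ^ (j.1 : ℕ) * Y) i j.2 := by
    rw [MonicAddAux.mul_blockcols (z • (1 : Matrix (Fin s × Fin r) (Fin s × Fin r) K) - G) (fun a : Fin s => G ^ (a : ℕ) * (S * q⁻¹))]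
    congr 1
    funext i j
    rw [hcol j.1]
  have hdet : IsUnit (z • (1 : Matrix (Fin s × Fin r) (Fin s × Fin r) K) - G).det := by
    have hV' := hV
    rw [← hprod, Matrix.det_mul] at hV'
    exact isUnit_of_mul_isUnit_left hV'
  have hS2 : S = (z • (1 : Matrix (Fin s × Fin r) (Fin s × Fin r) K) - G)⁻¹ * (Y * q) := by
    have h3 := congrArg (fun M => (z • (1 : Matrix (Fin s × Fin r) (Fin s × Fin r) K) - G)⁻¹ * M)
      key
    rw [← Matrix.mul_assoc, Matrix.nonsing_inv_mul _ hdet, Matrix.one_mul, hbs] at h3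
    exact h3
  have hfin : (X * (z • (1 : Matrix (Fin s × Fin r) (Fin s × Fin r) K) - G)⁻¹ * Y) * q = 1 := by
    rw [Matrix.mul_assoc (X * (z • 1 - G)⁻¹) Y q, Matrix.mul_assoc X _ (Y * q), ← hS2, hXS]
  exact (Matrix.inv_eq_left_inv hfin).symm
end
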